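/- For every natural number n, the following identity of binomial coefficients holds (Barrucand's identity): ∑_{k=0}^{n} C(n,k) · (∑_{j=0}^{k} C(k,j)^3) = ∑_{k=0}^{n} C(n,k)^2 · C(2k,k). -/

import Mathlib

open Finset

lemma bchoose_mul' {n k s : ℕ} (hsk : s ≤ k) :
    n.choose k * k.choose s = n.choose s * (n - s).choose (k - s) := by
  rcases le_or_gt k n with h | h
  · exact Nat.choose_mul hsk
  · rw [Nat.choose_eq_zero_of_lt h, Nat.zero_mul]
    rcases le_or_gt s n with h2 | h2
    · rw [Nat.choose_eq_zero_of_lt (by omega : n - s < k - s), Nat.mul_zero]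
    · rw [Nat.choose_eq_zero_of_lt h2, Nat.zero_mul]

lemma bvand (a b s : ℕ) :
    ∑ m ∈ range (s + 1), a.choose m * b.choose (s - m) = (a + b).choose s := by
  rw [Nat.add_choose_eq, Finset.Nat.sum_antidiagonal_eq_sum_range_succ_mk]

lemma bsameVand (a b : ℕ) :
    ∑ m ∈ range (a + 1), a.choose m * b.choose m = (a + b).choose b := by
  rw [← Finset.sum_range_reflect]
  have step : ∀ m ∈ range (a + 1),
      a.choose (a + 1 - 1 - m) * b.choose (a + 1 - 1 - m) = a.choose m * b.choose (a - m) := by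
    intro m hm
    rw [mem_range] at hm
    have h1 : a + 1 - 1 - m = a - m := by omega
    have h2 : a.choose (a - m) = a.choose m := Nat.choose_symm (by omega)
    rw [h1, h2]
  rw [Finset.sum_congr rfl step, bvand]
  have : a + b - b = a := by omega
  rw [← Nat.choose_symm (Nat.le_add_left b a), this]

lemma bswap_choose (k i t : ℕ) :
    k.choose i * (k - i).choose t = k.choose t * (k - t).choose i := by
  have h1 := bchoose_mul' (n := k) (k := i + t) (s := i) (Nat.le_add_right _ _)
  have h2 := bchoose_mul' (n := k) (k := i + t) (s := t) (Nat.le_add_left _ _)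
  have h3 : (i + t).choose i = (i + t).choose t := by
    rw [← Nat.choose_symm (Nat.le_add_left t i)]; congr 1; omega
  have e1 : (i + t) - i = t := by omega
  have e2 : (i + t) - t = i := by omega
  rw [e1] at h1; rw [e2] at h2
  rw [← h1, h3, h2]


lemma bsq_expand {k j : ℕ} (hjk : j ≤ k) :
    k.choose j ^ 2 = ∑ i ∈ range (j + 1),
      k.choose i * ((k - i).choose (2 * (j - i)) * (2 * (j - i)).choose (j - i)) := by
  have hv : k.choose j = ∑ i ∈ range (j + 1), j.choose i * (k - j).choose (j - i) := by
    rw [bvand]; congr 1; omega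
  calc k.choose j ^ 2
      = ∑ i ∈ range (j + 1), k.choose j * j.choose i * (k - j).choose (j - i) := by
        rw [pow_two]; nth_rewrite 2 [hv]; rw [Finset.mul_sum]
        exact Finset.sum_congr rfl fun i _ => by ring
    _ = ∑ i ∈ range (j + 1),
        k.choose i * ((k - i).choose (2 * (j - i)) * (2 * (j - i)).choose (j - i)) := by
        refine Finset.sum_congr rfl fun i hi => ?_
        rw [mem_range] at hi
        have hij : i ≤ j := by omega
        rw [bchoose_mul' hij]
        -- now: k.choose i * (k-i).choose (j-i) * (k-j).choose (j-i)
        have key : (k - i).choose (j - i) * (k - j).choose (j - i)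
            = (k - i).choose (2 * (j - i)) * (2 * (j - i)).choose (j - i) := by
          have hab : k - j = (k - i) - (j - i) := by omega
          have h2 := bchoose_mul' (n := k - i) (k := 2 * (j - i)) (s := j - i)
            (by omega)
          have e1 : 2 * (j - i) - (j - i) = j - i := by omega
          rw [e1] at h2
          rw [hab, ← h2]
        rw [mul_assoc, key]


lemma bfranel_expand (k : ℕ) :
    ∑ j ∈ range (k + 1), k.choose j ^ 3 =
      ∑ m ∈ range (k + 1),
        k.choose (2 * m) * ((2 * m).choose m * (2 * (k - m)).choose (k - m)) := by
  have F : ℕ → ℕ → ℕ := fun i j =>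
    k.choose j * (k.choose i * ((k - i).choose (2 * (j - i)) * (2 * (j - i)).choose (j - i)))
  calc ∑ j ∈ range (k + 1), k.choose j ^ 3
      = ∑ j ∈ range (k + 1), ∑ i ∈ range (j + 1),
          k.choose j * (k.choose i *
            ((k - i).choose (2 * (j - i)) * (2 * (j - i)).choose (j - i))) := by
        refine Finset.sum_congr rfl fun j hj => ?_
        rw [mem_range] at hj
        have : k.choose j ^ 3 = k.choose j * k.choose j ^ 2 := by ring
        rw [this, bsq_expand (by omega : j ≤ k), Finset.mul_sum]
    _ = ∑ i ∈ range (k + 1), ∑ j ∈ Finset.Ico i (k + 1),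
          k.choose j * (k.choose i *
            ((k - i).choose (2 * (j - i)) * (2 * (j - i)).choose (j - i))) := by
        rw [Finset.range_eq_Ico, Finset.sum_Ico_Ico_comm]; simp only [Finset.range_eq_Ico]
    _ = ∑ i ∈ range (k + 1), ∑ m ∈ range (k + 1 - i),
          k.choose (i + m) * (k.choose i * ((k - i).choose (2 * m) * (2 * m).choose m)) := by
        refine Finset.sum_congr rfl fun i _ => ?_
        rw [Finset.sum_Ico_eq_sum_range]
        refine Finset.sum_congr rfl fun m _ => ?_
        have : i + m - i = m := by omega
        rw [this]
    _ = ∑ i ∈ range (k + 1), ∑ m ∈ range (k + 1),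
          k.choose (i + m) * (k.choose i * ((k - i).choose (2 * m) * (2 * m).choose m)) := by
        refine Finset.sum_congr rfl fun i hi => ?_
        rw [mem_range] at hi
        refine Finset.sum_subset (Finset.range_subset_range.2 (by omega)) fun m hm hm' => ?_
        rw [mem_range] at hm
        rw [mem_range] at hm'
        have : k < i + m := by omega
        rw [Nat.choose_eq_zero_of_lt this, Nat.zero_mul]
    _ = ∑ m ∈ range (k + 1), (k.choose (2 * m) * (2 * m).choose m) *
          ∑ i ∈ range (k + 1), (k - 2 * m).choose i * k.choose (i + m) := by
        rw [Finset.sum_comm]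
        refine Finset.sum_congr rfl fun m _ => ?_
        rw [Finset.mul_sum]
        refine Finset.sum_congr rfl fun i _ => ?_
        have h := bswap_choose k i (2 * m)
        calc k.choose (i + m) * (k.choose i * ((k - i).choose (2 * m) * (2 * m).choose m))
            = (k.choose i * (k - i).choose (2 * m)) * ((2 * m).choose m * k.choose (i + m)) := by
              ring
          _ = (k.choose (2 * m) * (k - 2 * m).choose i) *
                ((2 * m).choose m * k.choose (i + m)) := by rw [h]
          _ = k.choose (2 * m) * (2 * m).choose m *
                ((k - 2 * m).choose i * k.choose (i + m)) := by ring
    _ = ∑ m ∈ range (k + 1),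
          k.choose (2 * m) * ((2 * m).choose m * (2 * (k - m)).choose (k - m)) := by
        refine Finset.sum_congr rfl fun m _ => ?_
        rcases le_or_gt (2 * m) k with h | h
        · have hsum : ∑ i ∈ range (k + 1), (k - 2 * m).choose i * k.choose (i + m)
              = (2 * (k - m)).choose (k - m) := by
            have hsub : ∑ i ∈ range (k - m + 1), (k - 2 * m).choose i * k.choose (i + m)
                = ∑ i ∈ range (k + 1), (k - 2 * m).choose i * k.choose (i + m) :=
              Finset.sum_subset (Finset.range_subset_range.2 (by omega)) (fun i hi hi' => by
                rw [mem_range] at hi hi'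
                rw [Nat.choose_eq_zero_of_lt (by omega : k < i + m), Nat.mul_zero])
            rw [← hsub]
            have hpt : ∀ i ∈ range (k - m + 1),
                (k - 2 * m).choose i * k.choose (i + m)
                  = (k - 2 * m).choose i * k.choose (k - m - i) := by
              intro i hi
              rw [mem_range] at hi
              have h2 : i + m ≤ k := by omega
              have h3 : k - (i + m) = k - m - i := by omega
              rw [← Nat.choose_symm h2, h3]
            rw [Finset.sum_congr rfl hpt, bvand]
            congr 1
            omega
          rw [hsum]; ring
        · rw [Nat.choose_eq_zero_of_lt h]; simp


lemma bfranel_form2 (k : ℕ) :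
    ∑ j ∈ range (k + 1), k.choose j ^ 3 =
      ∑ j ∈ range (k + 1), k.choose j * (j.choose (k - j) * (2 * j).choose j) := by
  rw [bfranel_expand, ← Finset.sum_range_reflect]
  refine Finset.sum_congr rfl fun j hj => ?_
  rw [mem_range] at hj
  have h1 : k + 1 - 1 - j = k - j := by omega
  have h2 : k - (k - j) = j := by omega
  rw [h1, h2]
  have key : k.choose (2 * (k - j)) * (2 * (k - j)).choose (k - j)
      = k.choose j * j.choose (k - j) := by
    have h3 := bchoose_mul' (n := k) (k := 2 * (k - j)) (s := k - j) (by omega)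
    have e1 : 2 * (k - j) - (k - j) = k - j := by omega
    rw [e1, h2] at h3
    rw [h3, Nat.choose_symm (by omega : j ≤ k)]
  rw [← mul_assoc, key, mul_assoc]

theorem barrucand_identity (n : ℕ) :
    ∑ k ∈ range (n + 1), n.choose k * ∑ j ∈ range (k + 1), (k.choose j) ^ 3
      = ∑ k ∈ range (n + 1), (n.choose k) ^ 2 * (2 * k).choose k := by
  calc ∑ k ∈ range (n + 1), n.choose k * ∑ j ∈ range (k + 1), (k.choose j) ^ 3
      = ∑ k ∈ range (n + 1), ∑ j ∈ range (n + 1),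
          n.choose k * (k.choose j * (j.choose (k - j) * (2 * j).choose j)) := by
        refine Finset.sum_congr rfl fun k hk => ?_
        rw [mem_range] at hk
        rw [bfranel_form2, Finset.mul_sum]
        refine Finset.sum_subset (Finset.range_subset_range.2 (by omega)) fun j hj hj' => ?_
        rw [mem_range] at hj hj'
        rw [Nat.choose_eq_zero_of_lt (by omega : k < j)]
        ring
    _ = ∑ j ∈ range (n + 1), ∑ k ∈ Finset.Ico j (n + 1),
          n.choose k * (k.choose j * (j.choose (k - j) * (2 * j).choose j)) := by
        rw [Finset.sum_comm]
        refine Finset.sum_congr rfl fun j hj => ?_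
        rw [mem_range] at hj
        rw [Finset.range_eq_Ico,
          ← Finset.sum_Ico_consecutive _ (Nat.zero_le j) (by omega : j ≤ n + 1)]
        have : ∑ k ∈ Finset.Ico 0 j,
            n.choose k * (k.choose j * (j.choose (k - j) * (2 * j).choose j)) = 0 := by
          refine Finset.sum_eq_zero fun k hk => ?_
          rw [Finset.mem_Ico] at hk
          rw [Nat.choose_eq_zero_of_lt (by omega : k < j)]
          ring
        rw [this, Nat.zero_add]
    _ = ∑ j ∈ range (n + 1), n.choose j * (2 * j).choose j *
          ∑ m ∈ range (n + 1 - j), (n - j).choose m * j.choose m := by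
        refine Finset.sum_congr rfl fun j hj => ?_
        rw [mem_range] at hj
        rw [Finset.sum_Ico_eq_sum_range, Finset.mul_sum]
        refine Finset.sum_congr rfl fun m _ => ?_
        have e1 : j + m - j = m := by omega
        have h3 := bchoose_mul' (n := n) (k := j + m) (s := j) (Nat.le_add_right _ _)
        rw [e1] at h3 ⊢
        calc n.choose (j + m) * ((j + m).choose j * (j.choose m * (2 * j).choose j))
            = (n.choose (j + m) * (j + m).choose j) * (j.choose m * (2 * j).choose j) := by
              ring
          _ = (n.choose j * (n - j).choose m) * (j.choose m * (2 * j).choose j) := by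
              rw [h3]
          _ = n.choose j * (2 * j).choose j * ((n - j).choose m * j.choose m) := by ring
    _ = ∑ k ∈ range (n + 1), (n.choose k) ^ 2 * (2 * k).choose k := by
        refine Finset.sum_congr rfl fun j hj => ?_
        rw [mem_range] at hj
        have e1 : n + 1 - j = (n - j) + 1 := by omega
        have e2 : n - j + j = n := by omega
        rw [e1, bsameVand, e2]
        ring
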